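/- If G is a finite simple graph of order n and G̅ is its complement, then b^A_g(G) + b^I_g(G̅) = ⌊n/2⌋. -/

import Mathlib

open SimpleGraph

/-- The balance score of a state `(S0, S1)` in a graph `G`: the number of edges of `G` with
one endpoint in `S0` and the other in `S1`, minus the number of edges with both endpoints
in `S0` or both endpoints in `S1`. -/
noncomputable def bscore {V : Type*} (G : SimpleGraph V) (S0 S1 : Set V) : ℤ :=
  ({e ∈ G.edgeSet | ∃ u ∈ S0, ∃ v ∈ S1, e = s(u, v)}.ncard : ℤ) -
  ({e ∈ G.edgeSet | (∃ u ∈ S0, ∃ v ∈ S0, e = s(u, v)) ∨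
      (∃ u ∈ S1, ∃ v ∈ S1, e = s(u, v))}.ncard : ℤ)

/-- The value of the balance game computed by backward induction, with `k` moves remaining.
`t = true` means it is Admirable's (the minimizer's) turn, `t = false` means it is
Impish's (the maximizer's) turn.  `S0` is the set of vertices selected by Admirable so far,
`S1` the set selected by Impish. -/
noncomputable def gameVal {V : Type*} [Fintype V] (G : SimpleGraph V) :
    ℕ → Bool → Finset V → Finset V → ℤ
  | 0, _, S0, S1 => bscore G ↑S0 ↑S1
  | (k + 1), t, S0, S1 =>
    letI := Classical.decEq V
    if h : (Finset.univ \ (S0 ∪ S1)).Nonempty then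
      if t then (Finset.univ \ (S0 ∪ S1)).inf' h fun v => gameVal G k false (insert v S0) S1
      else (Finset.univ \ (S0 ∪ S1)).sup' h fun v => gameVal G k true S0 (insert v S1)
    else bscore G ↑S0 ↑S1

/-- The (A)-start game balance number `b^A_g(G)`. -/
noncomputable def balA {V : Type*} [Fintype V] (G : SimpleGraph V) : ℤ :=
  gameVal G (Fintype.card V) true ∅ ∅

/-- The (I)-start game balance number `b^I_g(G)`. -/
noncomputable def balI {V : Type*} [Fintype V] (G : SimpleGraph V) : ℤ :=
  gameVal G (Fintype.card V) false ∅ ∅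

/-- The value of the cordiality game computed by backward induction (final score is
`|bscore|`), with `k` moves remaining; `t = true` means it is Admirable's turn. -/
noncomputable def cordVal {V : Type*} [Fintype V] (G : SimpleGraph V) :
    ℕ → Bool → Finset V → Finset V → ℤ
  | 0, _, S0, S1 => |bscore G ↑S0 ↑S1|
  | (k + 1), t, S0, S1 =>
    letI := Classical.decEq V
    if h : (Finset.univ \ (S0 ∪ S1)).Nonempty then
      if t then (Finset.univ \ (S0 ∪ S1)).inf' h fun v => cordVal G k false (insert v S0) S1
      else (Finset.univ \ (S0 ∪ S1)).sup' h fun v => cordVal G k true S0 (insert v S1)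
    else |bscore G ↑S0 ↑S1|

/-- The (A)-start game cordiality number `c^A_g(G)`. -/
noncomputable def cordA {V : Type*} [Fintype V] (G : SimpleGraph V) : ℤ :=
  cordVal G (Fintype.card V) true ∅ ∅

/-- The (I)-start game cordiality number `c^I_g(G)`. -/
noncomputable def cordI {V : Type*} [Fintype V] (G : SimpleGraph V) : ℤ :=
  cordVal G (Fintype.card V) false ∅ ∅

lemma bscore_symm {V : Type*} (G : SimpleGraph V) (S0 S1 : Set V) : bscore G S1 S0 = bscore G S0 S1 := by
  unfold bscore
  congr 3
  · ext e
    simp only [Set.mem_setOf_eq]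
    constructor
    · rintro ⟨he, u, hu, v, hv, rfl⟩
      exact ⟨he, v, hv, u, hu, Sym2.eq_swap⟩
    · rintro ⟨he, u, hu, v, hv, rfl⟩
      exact ⟨he, v, hv, u, hu, Sym2.eq_swap⟩
  · ext e
    simp only [Set.mem_setOf_eq]
    rw [or_comm]

lemma choose_two_cast (m : ℕ) : ((m.choose 2 : ℕ) : ℤ) * 2 = (m : ℤ) * ((m : ℤ) - 1) := by
  induction m with
  | zero => simp
  | succ n ih =>
    rw [Nat.choose_succ_succ, Nat.choose_one_right]
    push_cast
    push_cast at ih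
    linarith [ih]

lemma bscore_add_compl {V : Type*} [Fintype V] (G : SimpleGraph V) (S0 S1 : Finset V) (hd : Disjoint S0 S1) :
    bscore G ↑S0 ↑S1 + bscore Gᶜ ↑S0 ↑S1 =
      (S0.card : ℤ) * (S1.card : ℤ) - (S0.card.choose 2 : ℤ) - (S1.card.choose 2 : ℤ) := by
  classical
  set X : SimpleGraph V → Set (Sym2 V) :=
    fun H => {e ∈ H.edgeSet | ∃ u ∈ (S0 : Set V), ∃ v ∈ (S1 : Set V), e = s(u, v)} with hX
  set Y : SimpleGraph V → Set (Sym2 V) :=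
    fun H => {e ∈ H.edgeSet | (∃ u ∈ (S0 : Set V), ∃ v ∈ (S0 : Set V), e = s(u, v)) ∨
      (∃ u ∈ (S1 : Set V), ∃ v ∈ (S1 : Set V), e = s(u, v))} with hY
  have hb : ∀ H : SimpleGraph V, bscore H ↑S0 ↑S1 = ((X H).ncard : ℤ) - ((Y H).ncard : ℤ) :=
    fun H => rfl
  have hdset : Disjoint (S0 : Set V) (S1 : Set V) := by
    exact_mod_cast Finset.disjoint_coe.mpr hd
  -- unions
  have hXunion : X G ∪ X Gᶜ = X ⊤ := by
    ext e
    simp only [hX, Set.mem_union, Set.mem_setOf_eq]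
    constructor
    · rintro (⟨he, hp⟩ | ⟨he, hp⟩)
      · exact ⟨by rw [edgeSet_top]; exact G.not_isDiag_of_mem_edgeSet he, hp⟩
      · exact ⟨by rw [edgeSet_top]; exact Gᶜ.not_isDiag_of_mem_edgeSet he, hp⟩
    · rintro ⟨he, u, hu, v, hv, rfl⟩
      have hne : u ≠ v := by
        rintro rfl
        exact (Set.disjoint_left.mp hdset hu) hv
      by_cases hG : G.Adj u v
      · exact Or.inl ⟨hG, u, hu, v, hv, rfl⟩
      · exact Or.inr ⟨(G.compl_adj u v).mpr ⟨hne, hG⟩, u, hu, v, hv, rfl⟩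
  have hXdisj : Disjoint (X G) (X Gᶜ) := by
    rw [Set.disjoint_left]
    rintro e ⟨he1, -⟩ ⟨he2, -⟩
    induction e with
    | _ x y =>
      exact ((G.compl_adj x y).mp he2).2 he1
  have hYunion : Y G ∪ Y Gᶜ = Y ⊤ := by
    ext e
    simp only [hY, Set.mem_union, Set.mem_setOf_eq]
    constructor
    · rintro (⟨he, hp⟩ | ⟨he, hp⟩)
      · exact ⟨by rw [edgeSet_top]; exact G.not_isDiag_of_mem_edgeSet he, hp⟩
      · exact ⟨by rw [edgeSet_top]; exact Gᶜ.not_isDiag_of_mem_edgeSet he, hp⟩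
    · rintro ⟨he, hp⟩
      rw [edgeSet_top] at he
      obtain (⟨u, hu, v, hv, rfl⟩ | ⟨u, hu, v, hv, rfl⟩) := hp
      · have hne : u ≠ v := fun h => he (Sym2.mk_isDiag_iff.mpr h)
        by_cases hG : G.Adj u v
        · exact Or.inl ⟨hG, Or.inl ⟨u, hu, v, hv, rfl⟩⟩
        · exact Or.inr ⟨(G.compl_adj u v).mpr ⟨hne, hG⟩,
            Or.inl ⟨u, hu, v, hv, rfl⟩⟩
      · have hne : u ≠ v := fun h => he (Sym2.mk_isDiag_iff.mpr h)
        by_cases hG : G.Adj u v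
        · exact Or.inl ⟨hG, Or.inr ⟨u, hu, v, hv, rfl⟩⟩
        · exact Or.inr ⟨(G.compl_adj u v).mpr ⟨hne, hG⟩,
            Or.inr ⟨u, hu, v, hv, rfl⟩⟩
  have hYdisj : Disjoint (Y G) (Y Gᶜ) := by
    rw [Set.disjoint_left]
    rintro e ⟨he1, -⟩ ⟨he2, -⟩
    induction e with
    | _ x y =>
      exact ((G.compl_adj x y).mp he2).2 he1
  -- counts for the complete graph
  have hXtop : X ⊤ = ↑((S0 ×ˢ S1).image Sym2.mk.uncurry) := by
    ext e
    simp only [hX, Set.mem_setOf_eq, Finset.coe_image, Set.mem_image, Finset.mem_coe,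
      Finset.mem_product]
    constructor
    · rintro ⟨-, u, hu, v, hv, rfl⟩
      exact ⟨(u, v), ⟨hu, hv⟩, rfl⟩
    · rintro ⟨⟨u, v⟩, ⟨hu, hv⟩, rfl⟩
      have hne : u ≠ v := by
        rintro rfl
        exact (Finset.disjoint_left.mp hd hu) hv
      exact ⟨by rw [edgeSet_top]; simpa using hne, u, hu, v, hv, rfl⟩
  have hXcard : (X ⊤).ncard = S0.card * S1.card := by
    rw [hXtop, Set.ncard_coe_finset, Finset.card_image_of_injOn, Finset.card_product]
    rintro ⟨a, b⟩ hab ⟨c, d⟩ hcd heq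
    simp only [Finset.mem_coe, Finset.mem_product] at hab hcd
    change Sym2.mk (a, b).1 (a, b).2 = Sym2.mk (c, d).1 (c, d).2 at heq
    rw [Sym2.mk_eq_mk_iff] at heq
    obtain (h | h) := heq
    · exact h
    · simp only [Prod.swap_prod_mk, Prod.mk.injEq] at h
      obtain ⟨rfl, rfl⟩ := h
      exact absurd hab.1 (fun h' => (Finset.disjoint_left.mp hd h') hcd.2)
  have hYtop : Y ⊤ = ↑(S0.offDiag.image Sym2.mk.uncurry ∪ S1.offDiag.image Sym2.mk.uncurry) := by
    ext e
    simp only [hY, Set.mem_setOf_eq, Finset.coe_union, Set.mem_union, Finset.coe_image,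
      Set.mem_image, Finset.mem_coe, Finset.mem_offDiag]
    constructor
    · rintro ⟨he, (⟨u, hu, v, hv, rfl⟩ | ⟨u, hu, v, hv, rfl⟩)⟩
      · rw [edgeSet_top] at he
        exact Or.inl ⟨(u, v), ⟨hu, hv, fun h => he (Sym2.mk_isDiag_iff.mpr h)⟩, rfl⟩
      · rw [edgeSet_top] at he
        exact Or.inr ⟨(u, v), ⟨hu, hv, fun h => he (Sym2.mk_isDiag_iff.mpr h)⟩, rfl⟩
    · rintro (⟨⟨u, v⟩, ⟨hu, hv, hne⟩, rfl⟩ | ⟨⟨u, v⟩, ⟨hu, hv, hne⟩, rfl⟩)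
      · exact ⟨by rw [edgeSet_top]; simpa using hne, Or.inl ⟨u, hu, v, hv, rfl⟩⟩
      · exact ⟨by rw [edgeSet_top]; simpa using hne, Or.inr ⟨u, hu, v, hv, rfl⟩⟩
  have hYfdisj : Disjoint (S0.offDiag.image Sym2.mk.uncurry) (S1.offDiag.image Sym2.mk.uncurry) := by
    rw [Finset.disjoint_left]
    rintro e he0 he1
    simp only [Finset.mem_image, Finset.mem_offDiag] at he0 he1
    obtain ⟨⟨a, b⟩, ⟨ha, hb, -⟩, rfl⟩ := he0
    obtain ⟨⟨c, d⟩, ⟨hc1, hc2, -⟩, heq⟩ := he1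
    change Sym2.mk (c, d).1 (c, d).2 = Sym2.mk (a, b).1 (a, b).2 at heq
    rw [Sym2.mk_eq_mk_iff] at heq
    simp only [Prod.swap_prod_mk, Prod.mk.injEq] at heq
    obtain (⟨rfl, rfl⟩ | ⟨rfl, rfl⟩) := heq
    · exact (Finset.disjoint_left.mp hd ha) hc1
    · exact (Finset.disjoint_left.mp hd ha) hc2
  have hYcard : (Y ⊤).ncard = S0.card.choose 2 + S1.card.choose 2 := by
    rw [hYtop, Set.ncard_coe_finset, Finset.card_union_of_disjoint hYfdisj,
      Sym2.card_image_offDiag, Sym2.card_image_offDiag]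
  have e1 : (X G).ncard + (X Gᶜ).ncard = S0.card * S1.card := by
    rw [← Set.ncard_union_eq hXdisj (Set.toFinite _) (Set.toFinite _), hXunion, hXcard]
  have e2 : (Y G).ncard + (Y Gᶜ).ncard = S0.card.choose 2 + S1.card.choose 2 := by
    rw [← Set.ncard_union_eq hYdisj (Set.toFinite _) (Set.toFinite _), hYunion, hYcard]
  rw [hb G, hb Gᶜ]
  have e1' : ((X G).ncard : ℤ) + ((X Gᶜ).ncard : ℤ) = (S0.card : ℤ) * (S1.card : ℤ) := by
    exact_mod_cast congrArg (Nat.cast : ℕ → ℤ) e1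
  have e2' : ((Y G).ncard : ℤ) + ((Y Gᶜ).ncard : ℤ)
      = (S0.card.choose 2 : ℤ) + (S1.card.choose 2 : ℤ) := by
    exact_mod_cast congrArg (Nat.cast : ℕ → ℤ) e2
  linarith [e1', e2']

lemma arith1 (c k : ℕ) : c + 1 + k / 2 = c + (k+2)/2 := by omega
lemma arith2 (c k : ℕ) : c + (k - k / 2) = c + (k + 1 - (k+2)/2) := by omega
lemma arith3 (c k : ℕ) : c + 1 + (k - (k+1) / 2) = c + (k + 1 - (k+1)/2) := by omega
lemma arith4 (k : ℕ) : (k+1+1)/2 = (k+2)/2 := by omega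
lemma arith5 (k : ℕ) : k + 1 - 1 = k := rfl

section Game

attribute [local instance 2000] Classical.decEq

variable {V : Type*} [Fintype V]

/-- final score as a function of the two final sizes -/
noncomputable def fsc (a b : ℕ) : ℤ :=
  (a : ℤ) * (b : ℤ) - (a.choose 2 : ℤ) - (b.choose 2 : ℤ)

lemma sup'_const_sub {α : Type*} {s : Finset α} (h : s.Nonempty) (f : α → ℤ) (C : ℤ) :
    s.sup' h (fun v => C - f v) = C - s.inf' h f := by
  apply le_antisymm
  · exact Finset.sup'_le _ _ fun v hv => sub_le_sub_left (Finset.inf'_le _ hv) C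
  · obtain ⟨v, hv, hval⟩ := Finset.exists_mem_eq_inf' h f
    rw [hval]
    exact Finset.le_sup' (fun v => C - f v) hv

lemma key (G : SimpleGraph V) :
    ∀ (k : ℕ) (t : Bool) (S0 S1 : Finset V), Disjoint S0 S1 →
      (Finset.univ \ (S0 ∪ S1)).card = k →
      gameVal G k t S0 S1 + gameVal Gᶜ k (!t) S1 S0 =
        fsc (S0.card + (cond t ((k+1)/2) (k/2)))
            (S1.card + (k - (cond t ((k+1)/2) (k/2)))) := by
  intro k
  induction k with
  | zero =>
    intro t S0 S1 hd _
    have h0 : gameVal G 0 t S0 S1 = bscore G ↑S0 ↑S1 := by simp [gameVal]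
    have h1 : gameVal Gᶜ 0 (!t) S1 S0 = bscore Gᶜ ↑S1 ↑S0 := by simp [gameVal]
    rw [h0, h1, bscore_symm Gᶜ (↑S0) (↑S1), bscore_add_compl G S0 S1 hd]
    cases t <;> simp [fsc]
  | succ k ih =>
    intro t S0 S1 hd hcard
    have hne : (Finset.univ \ (S0 ∪ S1)).Nonempty :=
      Finset.card_pos.mp (by rw [hcard]; exact k.succ_pos)
    have hne' : (Finset.univ \ (S1 ∪ S0)).Nonempty := by
      rwa [Finset.union_comm]
    have hcomm : Finset.univ \ (S1 ∪ S0) = Finset.univ \ (S0 ∪ S1) := by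
      rw [Finset.union_comm]
    -- facts about a vertex in the remaining set
    have hvfacts : ∀ v ∈ Finset.univ \ (S0 ∪ S1), v ∉ S0 ∧ v ∉ S1 := by
      intro v hv
      simp only [Finset.mem_sdiff, Finset.mem_union] at hv
      exact ⟨fun h => hv.2 (Or.inl h), fun h => hv.2 (Or.inr h)⟩
    cases t with
    | true =>
      have hu1 : gameVal G (k+1) true S0 S1 =
          (Finset.univ \ (S0 ∪ S1)).inf' hne
            fun v => gameVal G k false (insert v S0) S1 := by
        simp [gameVal, dif_pos hne]
      have hu2 : gameVal Gᶜ (k+1) (!true) S1 S0 =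
          (Finset.univ \ (S0 ∪ S1)).sup' hne
            fun v => gameVal Gᶜ k true S1 (insert v S0) := by
        have : gameVal Gᶜ (k+1) false S1 S0 =
            (Finset.univ \ (S1 ∪ S0)).sup' hne'
              fun v => gameVal Gᶜ k true S1 (insert v S0) := by
          simp [gameVal, dif_pos hne']
        rw [Bool.not_true, this]
        exact Finset.sup'_congr hne' hcomm (fun _ _ => rfl)
      set C : ℤ := fsc (S0.card + (k+2)/2) (S1.card + (k + 1 - (k+2)/2)) with hC
      have hpt : ∀ v ∈ Finset.univ \ (S0 ∪ S1),
          gameVal Gᶜ k true S1 (insert v S0) =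
            C - gameVal G k false (insert v S0) S1 := by
        intro v hv
        obtain ⟨hv0, hv1⟩ := hvfacts v hv
        have hd' : Disjoint (insert v S0) S1 := by
          rw [Finset.disjoint_insert_left]
          exact ⟨hv1, hd⟩
        have hrem : Finset.univ \ (insert v S0 ∪ S1) =
            (Finset.univ \ (S0 ∪ S1)).erase v := by
          ext w
          simp only [Finset.mem_sdiff, Finset.mem_union, Finset.mem_erase, Finset.mem_insert,
            Finset.mem_univ, true_and]
          tauto
        have hcard' : (Finset.univ \ (insert v S0 ∪ S1)).card = k := by
          rw [hrem, Finset.card_erase_of_mem hv, hcard, arith5]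
        have := ih false (insert v S0) S1 hd' hcard'
        simp only [Bool.not_false, Bool.cond_false] at this
        rw [Finset.card_insert_of_notMem hv0] at this
        have hargs : fsc (S0.card + 1 + k / 2) (S1.card + (k - k / 2)) = C := by
          rw [hC, arith1, arith2]
        rw [hargs] at this
        linear_combination this
      rw [hu1, hu2, Finset.sup'_congr hne rfl hpt, sup'_const_sub hne
        (fun v => gameVal G k false (insert v S0) S1) C]
      have hif : (cond (true : Bool) ((k+1+1)/2) ((k+1)/2)) = (k+2)/2 := by
        rw [Bool.cond_true]
      rw [hif, ← hC]
      ring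
    | false =>
      have hu1 : gameVal G (k+1) false S0 S1 =
          (Finset.univ \ (S0 ∪ S1)).sup' hne
            fun v => gameVal G k true S0 (insert v S1) := by
        simp [gameVal, dif_pos hne]
      have hu2 : gameVal Gᶜ (k+1) (!false) S1 S0 =
          (Finset.univ \ (S0 ∪ S1)).inf' hne
            fun v => gameVal Gᶜ k false (insert v S1) S0 := by
        have : gameVal Gᶜ (k+1) true S1 S0 =
            (Finset.univ \ (S1 ∪ S0)).inf' hne'
              fun v => gameVal Gᶜ k false (insert v S1) S0 := by
          simp [gameVal, dif_pos hne']
        rw [Bool.not_false, this]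
        exact Finset.inf'_congr hne' hcomm (fun _ _ => rfl)
      set C : ℤ := fsc (S0.card + (k+1)/2) (S1.card + (k + 1 - (k+1)/2)) with hC
      have hpt : ∀ v ∈ Finset.univ \ (S0 ∪ S1),
          gameVal G k true S0 (insert v S1) =
            C - gameVal Gᶜ k false (insert v S1) S0 := by
        intro v hv
        obtain ⟨hv0, hv1⟩ := hvfacts v hv
        have hd' : Disjoint S0 (insert v S1) := by
          rw [Finset.disjoint_insert_right]
          exact ⟨hv0, hd⟩
        have hrem : Finset.univ \ (S0 ∪ insert v S1) =
            (Finset.univ \ (S0 ∪ S1)).erase v := by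
          ext w
          simp only [Finset.mem_sdiff, Finset.mem_union, Finset.mem_erase, Finset.mem_insert,
            Finset.mem_univ, true_and]
          tauto
        have hcard' : (Finset.univ \ (S0 ∪ insert v S1)).card = k := by
          rw [hrem, Finset.card_erase_of_mem hv, hcard, arith5]
        have := ih true S0 (insert v S1) hd' hcard'
        simp only [Bool.not_true, Bool.cond_true] at this
        rw [Finset.card_insert_of_notMem hv1] at this
        have hargs : fsc (S0.card + (k+1) / 2) (S1.card + 1 + (k - (k+1) / 2)) = C := by
          rw [hC, arith3]
        rw [hargs] at this
        linear_combination this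
      rw [hu1, hu2, Finset.sup'_congr hne rfl hpt, sup'_const_sub hne
        (fun v => gameVal Gᶜ k false (insert v S1) S0) C]
      have hif : (cond (false : Bool) ((k+1+1)/2) ((k+1)/2)) = (k+1)/2 := by
        rw [Bool.cond_false]
      rw [hif, ← hC]
      ring

end Game

lemma fsc_half (n : ℕ) : fsc ((n+1)/2) (n - (n+1)/2) = ((n / 2 : ℕ) : ℤ) := by
  rcases Nat.even_or_odd n with ⟨m, rfl⟩ | ⟨m, rfl⟩
  · have e1 : (m + m + 1) / 2 = m := by omega
    rw [e1]
    have e2 : m + m - m = m := by omega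
    rw [e2]
    have e3 : (m + m) / 2 = m := by omega
    rw [e3]
    unfold fsc
    have hc := choose_two_cast m
    linarith [hc]
  · have e1 : (2 * m + 1 + 1) / 2 = m + 1 := by omega
    rw [e1]
    have e2 : 2 * m + 1 - (m + 1) = m := by omega
    rw [e2]
    have e3 : (2 * m + 1) / 2 = m := by omega
    rw [e3]
    unfold fsc
    have hc1 := choose_two_cast (m + 1)
    have hc2 := choose_two_cast m
    push_cast at hc1 hc2 ⊢
    linarith [hc1, hc2]

theorem statement_1 {V : Type*} [Fintype V] (G : SimpleGraph V) :
    balA G + balI Gᶜ = ((Fintype.card V / 2 : ℕ) : ℤ) := by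

  have h := key G (Fintype.card V) true ∅ ∅ (Finset.disjoint_empty_left ∅) (by simp)
  simp only [Bool.not_true, Bool.cond_true, Finset.card_empty, Nat.zero_add] at h
  unfold balA balI
  rw [h]
  exact fsc_half (Fintype.card V)
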